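/- arXiv:1101.1176 — 3 statements merged into one kernel-verified Lean document; each statement's English description precedes it below -/
import Mathlib

section
/- Let $(a_t)_{t \geq 1}$ be a sequence of nonnegative reals such that $a_t \leq c_1 t^{-d/2}$ for all $t \geq 1$ (with $c_1 > 0$, $d \geq 3$) and $\sum_{t \geq 1} a_t = \eta < 1$. Then there exist constants $\beta < 1$ and $C_1 > 0$ such that for every $\ell \geq 1$ and every $t \geq 1$, $\sum_{t_1 + \cdots + t_\ell = t} a_{t_1} \cdots a_{t_\ell} \leq C_1 \beta^\ell t^{-d/2}$, where the sum is over $\ell$-tuples of positive integers summing to $t$. -/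
open Finset
open scoped BigOperators
set_option maxHeartbeats 1600000


noncomputable def convS (a : ℕ → ℝ) (ℓ t : ℕ) : ℝ :=
  ∑ f ∈ (Finset.Nat.antidiagonalTuple ℓ t).filter (fun f => ∀ i, 1 ≤ f i), ∏ i, a (f i)

lemma convS_nonneg (a : ℕ → ℝ) (ha0 : ∀ t, 0 ≤ a t) (ℓ t : ℕ) : 0 ≤ convS a ℓ t :=
  Finset.sum_nonneg fun f _ => Finset.prod_nonneg fun i _ => ha0 _

lemma convS_succ (a : ℕ → ℝ) (ℓ t : ℕ) :
    convS a (ℓ+1) t = ∑ p ∈ (Finset.HasAntidiagonal.antidiagonal t).filter (fun p => 1 ≤ p.1),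
      a p.1 * convS a ℓ p.2 := by
  unfold convS
  simp_rw [Finset.mul_sum]
  rw [Finset.sum_sigma']
  refine (Finset.sum_nbij'
    (i := fun (x : (_ : ℕ × ℕ) × (Fin ℓ → ℕ)) => Fin.cons x.1.1 x.2)
    (j := fun f => ⟨(f 0, ∑ i : Fin ℓ, f i.succ), Fin.tail f⟩)
    ?_ ?_ ?_ ?_ ?_).symm
  · rintro ⟨⟨u, v⟩, g⟩ hx
    simp only [Finset.mem_sigma, Finset.mem_filter, Finset.HasAntidiagonal.mem_antidiagonal,
      Finset.Nat.mem_antidiagonalTuple] at hx ⊢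
    obtain ⟨⟨huv, hu⟩, hg, hpos⟩ := hx
    refine ⟨?_, ?_⟩
    · rw [Fin.sum_univ_succ]
      simp only [Fin.cons_zero, Fin.cons_succ]
      rw [hg]; exact huv
    · intro i
      refine Fin.cases ?_ ?_ i
      · simpa using hu
      · intro j; simpa using hpos j
  · intro f hf
    simp only [Finset.mem_filter, Finset.Nat.mem_antidiagonalTuple] at hf
    obtain ⟨hsum, hpos⟩ := hf
    simp only [Finset.mem_sigma, Finset.mem_filter, Finset.HasAntidiagonal.mem_antidiagonal,
      Finset.Nat.mem_antidiagonalTuple]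
    refine ⟨⟨?_, hpos 0⟩, rfl, fun i => hpos i.succ⟩
    have := hsum
    rw [Fin.sum_univ_succ] at this
    exact this
  · rintro ⟨⟨u, v⟩, g⟩ hx
    simp only [Finset.mem_sigma, Finset.mem_filter, Finset.HasAntidiagonal.mem_antidiagonal,
      Finset.Nat.mem_antidiagonalTuple] at hx
    obtain ⟨⟨huv, hu⟩, hg, hpos⟩ := hx
    simp only [Fin.cons_zero, Fin.cons_succ]
    refine Sigma.ext ?_ ?_
    · simp [Prod.ext_iff, hg]
    · simp [Fin.tail_cons]
  · intro f hf
    exact Fin.cons_self_tail f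
  · rintro ⟨⟨u, v⟩, g⟩ hx
    rw [Fin.prod_univ_succ]
    simp

lemma convS_mass (a : ℕ → ℝ) (ha0 : ∀ t, 0 ≤ a t) (ℓ N : ℕ) :
    ∑ s ∈ Finset.range N, convS a ℓ s ≤ (∑ u ∈ Finset.Ico 1 N, a u) ^ ℓ := by
  have hdisj : (↑(Finset.range N) : Set ℕ).PairwiseDisjoint
      (fun s => (Finset.Nat.antidiagonalTuple ℓ s).filter (fun f => ∀ i, 1 ≤ f i)) := by
    intro s _ s' _ hss
    simp only [Finset.disjoint_left, Finset.mem_filter, Finset.Nat.mem_antidiagonalTuple]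
    rintro f ⟨h1, -⟩ ⟨h2, -⟩
    exact hss (h1.symm.trans h2)
  have h1 : ∑ s ∈ Finset.range N, convS a ℓ s
      = ∑ f ∈ (Finset.range N).biUnion
          (fun s => (Finset.Nat.antidiagonalTuple ℓ s).filter (fun f => ∀ i, 1 ≤ f i)),
          ∏ i, a (f i) := (Finset.sum_biUnion hdisj).symm
  have h2 : (∑ u ∈ Finset.Ico 1 N, a u) ^ ℓ
      = ∑ x ∈ Fintype.piFinset (fun _ : Fin ℓ => Finset.Ico 1 N), ∏ i, a (x i) := by
    rw [← Finset.prod_univ_sum]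
    simp
  rw [h1, h2]
  refine Finset.sum_le_sum_of_subset_of_nonneg ?_
    (fun f _ _ => Finset.prod_nonneg fun i _ => ha0 _)
  intro f hf
  simp only [Finset.mem_biUnion, Finset.mem_filter, Finset.Nat.mem_antidiagonalTuple,
    Finset.mem_range] at hf
  obtain ⟨s, hsN, hsum, hpos⟩ := hf
  simp only [Fintype.mem_piFinset, Finset.mem_Ico]
  intro i
  refine ⟨hpos i, ?_⟩
  calc f i ≤ ∑ j, f j := Finset.single_le_sum (fun j _ => Nat.zero_le _) (Finset.mem_univ i)
  _ = s := hsum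
  _ < N := hsN

theorem convolution_power_polynomial_decay
    (d : ℕ) (hd : 3 ≤ d) (a : ℕ → ℝ) (c₁ η : ℝ) (hc₁ : 0 < c₁)
    (ha0 : ∀ t, 0 ≤ a t)
    (hbound : ∀ t : ℕ, 1 ≤ t → a t ≤ c₁ * (t : ℝ) ^ (-(d : ℝ)/2))
    (hsum : Summable a) (hη : ∑' t, a t = η) (hη1 : η < 1) :
    ∃ β < (1:ℝ), ∃ C₁ > (0:ℝ), ∀ ℓ : ℕ, 1 ≤ ℓ → ∀ t : ℕ, 1 ≤ t →
      ∑ f ∈ (Finset.Nat.antidiagonalTuple ℓ t).filter (fun f => ∀ i, 1 ≤ f i),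
          ∏ i, a (f i)
        ≤ C₁ * β ^ ℓ * (t : ℝ) ^ (-(d : ℝ)/2) := by
  have hd0 : (0:ℝ) < (d:ℝ) := by
    have : (3:ℝ) ≤ (d:ℝ) := by exact_mod_cast hd
    linarith
  have hη0 : 0 ≤ η := by rw [← hη]; exact tsum_nonneg ha0
  obtain ⟨δ, hδ0, hηδ, hδ1, hηδδ⟩ : ∃ δ : ℝ, 0 < δ ∧ η < δ ∧ δ < 1 ∧ η < δ * δ :=
    ⟨(1 + η)/2, by linarith, by linarith, by linarith, by nlinarith [sq_nonneg (1-η)]⟩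
  obtain ⟨ε, hε0, h1ε, hkey⟩ :
      ∃ ε : ℝ, 0 < ε ∧ 0 < 1 - ε ∧ (1 - ε) ^ ((d:ℝ)/2) = δ := by
    have hδpow : (0:ℝ) < δ ^ ((2:ℝ)/d) := Real.rpow_pos_of_pos hδ0 _
    have hδpow1 : δ ^ ((2:ℝ)/d) < 1 := Real.rpow_lt_one hδ0.le hδ1 (by positivity)
    refine ⟨1 - δ ^ ((2:ℝ)/d), by linarith, by linarith, ?_⟩
    rw [sub_sub_cancel, ← Real.rpow_mul hδ0.le,
      show (2:ℝ)/d * ((d:ℝ)/2) = 1 by field_simp, Real.rpow_one]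
  have hkeyinv : (1-ε) ^ (-(d:ℝ)/2) = δ⁻¹ := by
    rw [show -(d:ℝ)/2 = -((d:ℝ)/2) by ring, Real.rpow_neg h1ε.le, hkey]
  obtain ⟨θ, hθ0, hθβ, hθδ⟩ : ∃ θ : ℝ, 0 ≤ θ ∧ θ < δ ∧ θ * δ = η := by
    refine ⟨η / δ, div_nonneg hη0 hδ0.le, ?_, div_mul_cancel₀ η hδ0.ne'⟩
    rw [div_lt_iff₀ hδ0]
    linarith
  obtain ⟨A, hApos, hAeq⟩ : ∃ A : ℝ, 0 < A ∧ A = c₁ * ε ^ (-(d:ℝ)/2) :=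
    ⟨c₁ * ε ^ (-(d:ℝ)/2), mul_pos hc₁ (Real.rpow_pos_of_pos hε0 _), rfl⟩
  obtain ⟨C₁, hC₁pos, hc₁Cδ, hACθ⟩ :
      ∃ C₁ : ℝ, 0 < C₁ ∧ c₁ ≤ C₁ * δ ∧ A + θ * C₁ ≤ C₁ * δ := by
    have hδθ : 0 < δ - θ := by linarith
    refine ⟨c₁ / δ + A / (δ - θ), ?_, ?_, ?_⟩
    · have h1 : 0 < c₁ / δ := div_pos hc₁ hδ0
      have h2 : 0 < A / (δ - θ) := div_pos hApos hδθ
      linarith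
    · have h2 : 0 ≤ A / (δ - θ) := (div_pos hApos hδθ).le
      have h3 : (c₁ / δ + A / (δ - θ)) * δ = c₁ + (A / (δ - θ)) * δ := by
        field_simp
      rw [h3]
      nlinarith
    · have h1 : 0 ≤ c₁ / δ := (div_pos hc₁ hδ0).le
      have h2 : (c₁ / δ + A / (δ - θ)) * (δ - θ) = (c₁ / δ) * (δ - θ) + A := by
        field_simp
      nlinarith
  have hpartial : ∀ s : Finset ℕ, ∑ u ∈ s, a u ≤ η :=
    fun s => hη ▸ hsum.sum_le_tsum s (fun i _ => ha0 i)
  refine ⟨δ, hδ1, C₁, hC₁pos, ?_⟩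
  have main : ∀ ℓ : ℕ, 1 ≤ ℓ → ∀ t : ℕ, 1 ≤ t →
      convS a ℓ t ≤ C₁ * δ ^ ℓ * (t:ℝ) ^ (-(d:ℝ)/2) := by
    intro ℓ hℓ
    induction ℓ, hℓ using Nat.le_induction with
    | base =>
      intro t ht
      have htR : (0:ℝ) < (t:ℝ) := by exact_mod_cast Nat.lt_of_lt_of_le Nat.zero_lt_one ht
      have hP : (0:ℝ) < (t:ℝ) ^ (-(d:ℝ)/2) := Real.rpow_pos_of_pos htR _
      have h1 : convS a 1 t = a t := by
        simp [convS, Finset.Nat.antidiagonalTuple_one, Finset.filter_singleton,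
          Fin.forall_fin_one, ht]
      rw [h1, pow_one]
      calc a t ≤ c₁ * (t:ℝ) ^ (-(d:ℝ)/2) := hbound t ht
        _ ≤ (C₁ * δ) * (t:ℝ) ^ (-(d:ℝ)/2) := mul_le_mul_of_nonneg_right hc₁Cδ hP.le
    | succ ℓ hℓ IH =>
      intro t ht
      have htR : (0:ℝ) < (t:ℝ) := by exact_mod_cast Nat.lt_of_lt_of_le Nat.zero_lt_one ht
      have hP : (0:ℝ) < (t:ℝ) ^ (-(d:ℝ)/2) := Real.rpow_pos_of_pos htR _
      set P : ℝ := (t:ℝ) ^ (-(d:ℝ)/2) with hPdef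
      rw [convS_succ]
      set F := (Finset.HasAntidiagonal.antidiagonal t).filter (fun p => 1 ≤ p.1) with hF
      have hsplit := (Finset.sum_filter_add_sum_filter_not F
        (fun p => ε * (t:ℝ) ≤ (p.1:ℝ)) (fun p => a p.1 * convS a ℓ p.2)).symm
      rw [hsplit]
      -- Region A : large first coordinate
      have hmass : ∑ k ∈ Finset.range (t+1), convS a ℓ k ≤ η ^ ℓ := by
        calc ∑ k ∈ Finset.range (t+1), convS a ℓ k
            ≤ (∑ u ∈ Finset.Ico 1 (t+1), a u) ^ ℓ := convS_mass a ha0 ℓ (t+1)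
          _ ≤ η ^ ℓ := pow_le_pow_left₀
              (Finset.sum_nonneg fun i _ => ha0 i) (hpartial _) ℓ
      have hsumconv : ∑ p ∈ F.filter (fun p => ε * (t:ℝ) ≤ (p.1:ℝ)), convS a ℓ p.2
          ≤ η ^ ℓ := by
        calc ∑ p ∈ F.filter (fun p => ε * (t:ℝ) ≤ (p.1:ℝ)), convS a ℓ p.2
            ≤ ∑ p ∈ Finset.HasAntidiagonal.antidiagonal t, convS a ℓ p.2 := by
              refine Finset.sum_le_sum_of_subset_of_nonneg ?_
                (fun p _ _ => convS_nonneg a ha0 ℓ p.2)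
              exact (Finset.filter_subset _ _).trans (Finset.filter_subset _ _)
          _ = ∑ k ∈ Finset.range (t+1), convS a ℓ (t - k) :=
              Finset.Nat.sum_antidiagonal_eq_sum_range_succ_mk _ t
          _ = ∑ k ∈ Finset.range (t+1), convS a ℓ k := by
              simpa using Finset.sum_range_reflect (fun k => convS a ℓ k) (t+1)
          _ ≤ η ^ ℓ := hmass
      have hboundA : ∑ p ∈ F.filter (fun p => ε * (t:ℝ) ≤ (p.1:ℝ)),
          a p.1 * convS a ℓ p.2 ≤ A * P * η ^ ℓ := by
        have hterm : ∀ p ∈ F.filter (fun p => ε * (t:ℝ) ≤ (p.1:ℝ)),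
            a p.1 * convS a ℓ p.2 ≤ (A * P) * convS a ℓ p.2 := by
          intro p hp
          simp only [Finset.mem_filter, hF] at hp
          obtain ⟨⟨-, hp1⟩, hpε⟩ := hp
          refine mul_le_mul_of_nonneg_right ?_ (convS_nonneg a ha0 ℓ p.2)
          have hεt : (0:ℝ) < ε * t := mul_pos hε0 htR
          calc a p.1 ≤ c₁ * (p.1:ℝ) ^ (-(d:ℝ)/2) := hbound p.1 hp1
            _ ≤ c₁ * (ε * (t:ℝ)) ^ (-(d:ℝ)/2) := by
                refine mul_le_mul_of_nonneg_left ?_ hc₁.le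
                refine Real.rpow_le_rpow_of_nonpos hεt hpε ?_
                rw [neg_div]
                exact neg_nonpos.mpr (by positivity)
            _ = A * P := by
                rw [hAeq, hPdef, Real.mul_rpow hε0.le htR.le]; ring
        calc ∑ p ∈ F.filter (fun p => ε * (t:ℝ) ≤ (p.1:ℝ)), a p.1 * convS a ℓ p.2
            ≤ ∑ p ∈ F.filter (fun p => ε * (t:ℝ) ≤ (p.1:ℝ)), (A * P) * convS a ℓ p.2 :=
              Finset.sum_le_sum hterm
          _ = (A * P) * ∑ p ∈ F.filter (fun p => ε * (t:ℝ) ≤ (p.1:ℝ)), convS a ℓ p.2 :=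
              (Finset.mul_sum _ _ _).symm
          _ ≤ (A * P) * η ^ ℓ :=
              mul_le_mul_of_nonneg_left hsumconv (mul_nonneg hApos.le hP.le)
          _ = A * P * η ^ ℓ := by ring
      -- Region B : small first coordinate
      have hsuma : ∑ p ∈ F.filter (fun p => ¬ ε * (t:ℝ) ≤ (p.1:ℝ)), a p.1 ≤ η := by
        calc ∑ p ∈ F.filter (fun p => ¬ ε * (t:ℝ) ≤ (p.1:ℝ)), a p.1
            ≤ ∑ p ∈ Finset.HasAntidiagonal.antidiagonal t, a p.1 := by
              refine Finset.sum_le_sum_of_subset_of_nonneg ?_ (fun p _ _ => ha0 _)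
              exact (Finset.filter_subset _ _).trans (Finset.filter_subset _ _)
          _ = ∑ k ∈ Finset.range (t+1), a k :=
              Finset.Nat.sum_antidiagonal_eq_sum_range_succ_mk _ t
          _ ≤ η := hpartial _
      have hδℓ0 : (0:ℝ) ≤ δ ^ ℓ := pow_nonneg hδ0.le ℓ
      set B : ℝ := C₁ * δ ^ ℓ * δ⁻¹ * P with hBdef
      have hB0 : 0 ≤ B :=
        mul_nonneg (mul_nonneg (mul_nonneg hC₁pos.le hδℓ0) (inv_nonneg.mpr hδ0.le)) hP.le
      have hboundB : ∑ p ∈ F.filter (fun p => ¬ ε * (t:ℝ) ≤ (p.1:ℝ)),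
          a p.1 * convS a ℓ p.2 ≤ η * B := by
        have hterm : ∀ p ∈ F.filter (fun p => ¬ ε * (t:ℝ) ≤ (p.1:ℝ)),
            a p.1 * convS a ℓ p.2 ≤ a p.1 * B := by
          intro p hp
          simp only [Finset.mem_filter, hF, Finset.HasAntidiagonal.mem_antidiagonal, not_le] at hp
          obtain ⟨⟨hpt, hp1⟩, hpε⟩ := hp
          have hp2R : ((1-ε) * (t:ℝ)) < (p.2:ℝ) := by
            have hcast : (p.1:ℝ) + (p.2:ℝ) = (t:ℝ) := by exact_mod_cast hpt
            nlinarith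
          have h1εt : (0:ℝ) < (1-ε) * t := mul_pos h1ε htR
          have hp2pos : 1 ≤ p.2 := by
            have h0 : (0:ℝ) < (p.2:ℝ) := lt_trans h1εt hp2R
            have : 0 < p.2 := by exact_mod_cast h0
            omega
          refine mul_le_mul_of_nonneg_left ?_ (ha0 _)
          calc convS a ℓ p.2 ≤ C₁ * δ ^ ℓ * (p.2:ℝ) ^ (-(d:ℝ)/2) := IH p.2 hp2pos
            _ ≤ C₁ * δ ^ ℓ * ((1-ε) * (t:ℝ)) ^ (-(d:ℝ)/2) := by
                refine mul_le_mul_of_nonneg_left ?_ (mul_nonneg hC₁pos.le hδℓ0)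
                refine Real.rpow_le_rpow_of_nonpos h1εt hp2R.le ?_
                rw [neg_div]
                exact neg_nonpos.mpr (by positivity)
            _ = B := by
                rw [hBdef, hPdef, Real.mul_rpow h1ε.le htR.le, hkeyinv]; ring
        calc ∑ p ∈ F.filter (fun p => ¬ ε * (t:ℝ) ≤ (p.1:ℝ)), a p.1 * convS a ℓ p.2
            ≤ ∑ p ∈ F.filter (fun p => ¬ ε * (t:ℝ) ≤ (p.1:ℝ)), a p.1 * B :=
              Finset.sum_le_sum hterm
          _ = (∑ p ∈ F.filter (fun p => ¬ ε * (t:ℝ) ≤ (p.1:ℝ)), a p.1) * B := by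
              rw [Finset.sum_mul]
          _ ≤ η * B := mul_le_mul_of_nonneg_right hsuma hB0
      -- Combine
      have hfinal : A * P * η ^ ℓ + η * B ≤ C₁ * δ ^ (ℓ+1) * P := by
        have hηℓ : η ^ ℓ ≤ δ ^ ℓ := pow_le_pow_left₀ hη0 hηδ.le ℓ
        have hηB : η * B = θ * C₁ * δ ^ ℓ * P := by
          rw [hBdef, ← hθδ]
          field_simp
        rw [hηB]
        have h1 : A * P * η ^ ℓ ≤ A * δ ^ ℓ * P := by
          calc A * P * η ^ ℓ = (A * P) * η ^ ℓ := by ring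
            _ ≤ (A * P) * δ ^ ℓ :=
              mul_le_mul_of_nonneg_left hηℓ (mul_nonneg hApos.le hP.le)
            _ = A * δ ^ ℓ * P := by ring
        have h2 : A * δ ^ ℓ * P + θ * C₁ * δ ^ ℓ * P ≤ C₁ * δ ^ (ℓ+1) * P := by
          calc A * δ ^ ℓ * P + θ * C₁ * δ ^ ℓ * P = (A + θ * C₁) * (δ ^ ℓ * P) := by ring
            _ ≤ (C₁ * δ) * (δ ^ ℓ * P) :=
              mul_le_mul_of_nonneg_right hACθ (mul_nonneg hδℓ0 hP.le)
            _ = C₁ * δ ^ (ℓ+1) * P := by ring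
        linarith
      calc _ ≤ A * P * η ^ ℓ + η * B := add_le_add hboundA hboundB
        _ ≤ C₁ * δ ^ (ℓ+1) * P := hfinal
  intro ℓ hℓ t ht
  exact main ℓ hℓ t ht
end

section
/- Let $(\mathcal{N}_t)_{t \geq 0}$ be a nonnegative martingale with $\mathcal{N}_0 = 1$ on a filtered probability space, and let $\mathcal{N}_\infty$ be its almost sure limit. Suppose that for every $s \geq 0$ one has the branching decomposition $\mathcal{N}_\infty = \sum_{i} w_i^{(s)} \mathcal{N}_\infty^{(s,i)}$ almost surely, where $w_i^{(s)} \geq 0$ are $\mathcal{F}_s$-measurable with $\sum_i w_i^{(s)} = \mathcal{N}_s$, and conditionally on $\mathcal{F}_s$ each $\mathcal{N}_\infty^{(s,i)}$ is distributed as $\mathcal{N}_\infty$ with $E[\mathcal{N}_\infty^{(s,i)} \mid \mathcal{F}_s] = \ell := E[\mathcal{N}_\infty]$. Then $\ell \in \{0, 1\}$. -/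
open MeasureTheory Filter
open scoped ENNReal NNReal

lemma tsum_ofReal_ne_top_iff_summable {f : ℕ → ℝ} (hf : ∀ i, 0 ≤ f i) :
    (∑' i, ENNReal.ofReal (f i)) ≠ ⊤ ↔ Summable f := by
  have hrw : ∀ i, ENNReal.ofReal (f i) = ((f i).toNNReal : ENNReal) := fun _ => rfl
  simp_rw [hrw]
  rw [ENNReal.tsum_coe_ne_top_iff_summable]
  constructor
  · intro h
    exact (NNReal.summable_coe.2 h).congr fun i => Real.coe_toNNReal _ (hf i)
  · exact fun h => h.toNNReal

theorem expectation_limit_martingale_zero_or_one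
    {Ω : Type*} {m0 : MeasurableSpace Ω} {μ : Measure Ω} [IsProbabilityMeasure μ]
    (ℱ : Filtration ℕ m0) (N : ℕ → Ω → ℝ) (Ninf : Ω → ℝ)
    (hmart : Martingale N ℱ μ) (hpos : ∀ t ω, 0 ≤ N t ω) (hN0 : ∀ ω, N 0 ω = 1)
    (hlim : ∀ᵐ ω ∂μ, Tendsto (fun t => N t ω) atTop (nhds (Ninf ω)))
    (hNinf_int : Integrable Ninf μ)
    (ℓ : ℝ) (hℓ : ℓ = ∫ ω, Ninf ω ∂μ)
    (w : ℕ → ℕ → Ω → ℝ) (Ninf' : ℕ → ℕ → Ω → ℝ)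
    (hw0 : ∀ s i ω, 0 ≤ w s i ω)
    (hwmeas : ∀ s i, StronglyMeasurable[ℱ s] (w s i))
    (hwsum : ∀ s, ∀ᵐ ω ∂μ, ∑' i, w s i ω = N s ω)
    (hdecomp : ∀ s, ∀ᵐ ω ∂μ, Ninf ω = ∑' i, w s i ω * Ninf' s i ω)
    (hdist : ∀ s i, μ.map (Ninf' s i) = μ.map Ninf)
    (hcond : ∀ s i, μ[Ninf' s i | ℱ s] =ᵐ[μ] fun _ => ℓ) :
    ℓ = 0 ∨ ℓ = 1 := by
  classical
  have hNint : ∀ t, Integrable (N t) μ := hmart.integrable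
  have hNinf_nn : 0 ≤ᵐ[μ] Ninf := by
    filter_upwards [hlim] with ω hω
    exact ge_of_tendsto' hω fun t => hpos t ω
  have hℓnn : 0 ≤ ℓ := hℓ ▸ integral_nonneg_of_ae hNinf_nn
  have hNmean : ∀ t, ∫ ω, N t ω ∂μ = 1 := by
    intro t
    calc ∫ ω, N t ω ∂μ = ∫ ω, (μ[N t|ℱ 0]) ω ∂μ :=
          (integral_condExp (ℱ.le 0)).symm
      _ = ∫ ω, N 0 ω ∂μ := integral_congr_ae (hmart.condExp_ae_eq (Nat.zero_le t))
      _ = 1 := by simp [hN0]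
  -- facts about Ninf'
  have hN'meas : ∀ s i, AEMeasurable (Ninf' s i) μ := by
    intro s i
    by_contra h
    have h0 : μ.map (Ninf' s i) = 0 := Measure.map_of_not_aemeasurable h
    have h1 : μ.map Ninf Set.univ = 1 := by
      rw [Measure.map_apply_of_aemeasurable hNinf_int.aemeasurable MeasurableSet.univ]
      simp
    rw [← hdist s i, h0] at h1
    simp at h1
  have hN'int : ∀ s i, Integrable (Ninf' s i) μ := by
    intro s i
    have h1 : Integrable id (μ.map Ninf) :=
      (integrable_map_measure measurable_id.aestronglyMeasurable
        hNinf_int.aemeasurable).mpr (by simpa [Function.comp] using hNinf_int)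
    have h2 := (integrable_map_measure measurable_id.aestronglyMeasurable (hN'meas s i)).mp
      (by rw [hdist s i]; exact h1)
    simpa [Function.comp] using h2
  have hN'nn : ∀ s i, 0 ≤ᵐ[μ] Ninf' s i := by
    intro s i
    have h2 : μ {ω | Ninf ω < 0} = 0 := by
      simpa [not_le] using ae_iff.mp hNinf_nn
    have h3 : μ {ω | Ninf' s i ω < 0} = 0 := by
      calc μ {ω | Ninf' s i ω < 0} = μ.map (Ninf' s i) (Set.Iio 0) := by
            rw [Measure.map_apply_of_aemeasurable (hN'meas s i) measurableSet_Iio]; rfl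
        _ = μ.map Ninf (Set.Iio 0) := by rw [hdist]
        _ = μ {ω | Ninf ω < 0} := by
            rw [Measure.map_apply_of_aemeasurable hNinf_int.aemeasurable measurableSet_Iio]; rfl
        _ = 0 := h2
    rw [Filter.EventuallyLE, ae_iff]
    simpa [not_le] using h3
  -- the key conditional expectation identity
  have hce : ∀ s, (fun ω => ℓ * N s ω) =ᵐ[μ] μ[Ninf | ℱ s] := by
    intro s
    have hm : ℱ s ≤ m0 := ℱ.le s
    -- step 1: the truncated pull-out identity, summed up in ℝ≥0∞
    have key_i : ∀ i A, MeasurableSet[ℱ s] A →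
        ∫⁻ ω in A, ENNReal.ofReal (w s i ω * Ninf' s i ω) ∂μ
          = ENNReal.ofReal ℓ * ∫⁻ ω in A, ENNReal.ofReal (w s i ω) ∂μ := by
      intro i A hA
      have hA' : MeasurableSet A := hm _ hA
      -- truncated weights
      set wn : ℕ → Ω → ℝ := fun n ω => min (w s i ω) n with hwn
      have hwn_meas : ∀ n, StronglyMeasurable[ℱ s] (wn n) :=
        fun n => ((hwmeas s i).measurable.min measurable_const).stronglyMeasurable
      have hwn_nn : ∀ n ω, 0 ≤ wn n ω := fun n ω => le_min (hw0 s i ω) (n.cast_nonneg)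
      have hwn_le : ∀ n ω, wn n ω ≤ n := fun n ω => min_le_right _ _
      have hwn_int : ∀ n, Integrable (wn n) μ := by
        intro n
        refine Integrable.mono' (integrable_const (n : ℝ))
          ((hwn_meas n).mono hm).aestronglyMeasurable (ae_of_all _ fun ω => ?_)
        rw [Real.norm_of_nonneg (hwn_nn n ω)]
        exact hwn_le n ω
      have hwnN'_int : ∀ n, Integrable (fun ω => wn n ω * Ninf' s i ω) μ := by
        intro n
        refine (hN'int s i).bdd_mul ((hwn_meas n).mono hm).aestronglyMeasurable
          (c := (n : ℝ)) (ae_of_all _ fun ω => ?_)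
        rw [Real.norm_of_nonneg (hwn_nn n ω)]
        exact hwn_le n ω
      -- truncated identity at level n, Bochner form
      have hBochner : ∀ n, ∫ ω in A, wn n ω * Ninf' s i ω ∂μ = ℓ * ∫ ω in A, wn n ω ∂μ := by
        intro n
        have hpull := condExp_mul_of_stronglyMeasurable_left (hwn_meas n) (hwnN'_int n) (hN'int s i)
        have hpull2 : μ[fun ω => wn n ω * Ninf' s i ω|ℱ s] =ᵐ[μ] fun ω => wn n ω * ℓ := by
          refine hpull.trans ?_
          filter_upwards [hcond s i] with ω hω
          simp only [Pi.mul_apply, hω]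
        calc ∫ ω in A, wn n ω * Ninf' s i ω ∂μ
            = ∫ ω in A, (μ[fun ω => wn n ω * Ninf' s i ω|ℱ s]) ω ∂μ :=
              (setIntegral_condExp hm (hwnN'_int n) hA).symm
          _ = ∫ ω in A, wn n ω * ℓ ∂μ :=
              setIntegral_congr_ae hA' (hpull2.mono fun ω hω _ => hω)
          _ = ℓ * ∫ ω in A, wn n ω ∂μ := by
              simp_rw [mul_comm (wn _ _) ℓ]
              exact integral_const_mul ℓ _
      -- truncated identity at level n, lintegral form
      have hLin : ∀ n, ∫⁻ ω in A, ENNReal.ofReal (wn n ω * Ninf' s i ω) ∂μ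
          = ENNReal.ofReal ℓ * ∫⁻ ω in A, ENNReal.ofReal (wn n ω) ∂μ := by
        intro n
        have h1 : ENNReal.ofReal (∫ ω in A, wn n ω * Ninf' s i ω ∂μ)
            = ∫⁻ ω in A, ENNReal.ofReal (wn n ω * Ninf' s i ω) ∂μ := by
          refine ofReal_integral_eq_lintegral_ofReal ((hwnN'_int n).restrict) ?_
          refine ae_restrict_of_ae ?_
          filter_upwards [hN'nn s i] with ω hω
          exact mul_nonneg (hwn_nn n ω) hω
        have h2 : ENNReal.ofReal (∫ ω in A, wn n ω ∂μ)
            = ∫⁻ ω in A, ENNReal.ofReal (wn n ω) ∂μ :=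
          ofReal_integral_eq_lintegral_ofReal ((hwn_int n).restrict)
            (ae_restrict_of_ae (ae_of_all _ (hwn_nn n)))
        rw [← h1, ← h2, hBochner n, ENNReal.ofReal_mul hℓnn]
      -- pass to the limit n → ∞
      have hmono : ∀ᵐ ω ∂μ.restrict A,
          Monotone fun n => ENNReal.ofReal (wn n ω * Ninf' s i ω) := by
        refine ae_restrict_of_ae ?_
        filter_upwards [hN'nn s i] with ω hω
        intro a b hab
        exact ENNReal.ofReal_le_ofReal (mul_le_mul_of_nonneg_right
          (min_le_min le_rfl (Nat.cast_le.2 hab)) hω)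
      have hmono2 : ∀ᵐ ω ∂μ.restrict A, Monotone fun n => ENNReal.ofReal (wn n ω) :=
        ae_of_all _ fun ω a b hab =>
          ENNReal.ofReal_le_ofReal (min_le_min le_rfl (Nat.cast_le.2 hab))
      have hsup1 : ∀ ω, (⨆ n, ENNReal.ofReal (wn n ω * Ninf' s i ω))
          = ENNReal.ofReal (w s i ω * Ninf' s i ω) := by
        intro ω
        refine le_antisymm (iSup_le fun n => ?_) ?_
        · rcases le_or_gt 0 (Ninf' s i ω) with h | h
          · exact ENNReal.ofReal_le_ofReal (mul_le_mul_of_nonneg_right (min_le_left _ _) h)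
          · have : wn n ω * Ninf' s i ω ≤ 0 := mul_nonpos_of_nonneg_of_nonpos (hwn_nn n ω) h.le
            simp [ENNReal.ofReal_of_nonpos this]
        · have hex : wn ⌈w s i ω⌉₊ ω = w s i ω := min_eq_left (Nat.le_ceil _)
          calc ENNReal.ofReal (w s i ω * Ninf' s i ω)
              = ENNReal.ofReal (wn ⌈w s i ω⌉₊ ω * Ninf' s i ω) := by rw [hex]
            _ ≤ ⨆ n, ENNReal.ofReal (wn n ω * Ninf' s i ω) :=
                le_iSup (fun n => ENNReal.ofReal (wn n ω * Ninf' s i ω)) ⌈w s i ω⌉₊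
      have hsup2 : ∀ ω, (⨆ n, ENNReal.ofReal (wn n ω)) = ENNReal.ofReal (w s i ω) := by
        intro ω
        refine le_antisymm (iSup_le fun n => ENNReal.ofReal_le_ofReal (min_le_left _ _)) ?_
        have hex : wn ⌈w s i ω⌉₊ ω = w s i ω := min_eq_left (Nat.le_ceil _)
        calc ENNReal.ofReal (w s i ω) = ENNReal.ofReal (wn ⌈w s i ω⌉₊ ω) := by rw [hex]
          _ ≤ ⨆ n, ENNReal.ofReal (wn n ω) :=
              le_iSup (fun n => ENNReal.ofReal (wn n ω)) ⌈w s i ω⌉₊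
      have haemeas1 : ∀ n, AEMeasurable
          (fun ω => ENNReal.ofReal (wn n ω * Ninf' s i ω)) (μ.restrict A) := by
        intro n
        exact (ENNReal.measurable_ofReal.comp_aemeasurable
          ((((hwn_meas n).mono hm).measurable.aemeasurable.mul (hN'meas s i)))).restrict
      have haemeas2 : ∀ n, AEMeasurable (fun ω => ENNReal.ofReal (wn n ω)) (μ.restrict A) :=
        fun n => (ENNReal.measurable_ofReal.comp
          ((hwn_meas n).mono hm).measurable).aemeasurable.restrict
      calc ∫⁻ ω in A, ENNReal.ofReal (w s i ω * Ninf' s i ω) ∂μ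
          = ∫⁻ ω in A, ⨆ n, ENNReal.ofReal (wn n ω * Ninf' s i ω) ∂μ := by
            refine lintegral_congr fun ω => ?_
            rw [hsup1 ω]
        _ = ⨆ n, ∫⁻ ω in A, ENNReal.ofReal (wn n ω * Ninf' s i ω) ∂μ :=
            lintegral_iSup' haemeas1 hmono
        _ = ⨆ n, ENNReal.ofReal ℓ * ∫⁻ ω in A, ENNReal.ofReal (wn n ω) ∂μ := by
            refine iSup_congr fun n => hLin n
        _ = ENNReal.ofReal ℓ * ⨆ n, ∫⁻ ω in A, ENNReal.ofReal (wn n ω) ∂μ :=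
            (ENNReal.mul_iSup _ _).symm
        _ = ENNReal.ofReal ℓ * ∫⁻ ω in A, ⨆ n, ENNReal.ofReal (wn n ω) ∂μ := by
            rw [lintegral_iSup' haemeas2 hmono2]
        _ = ENNReal.ofReal ℓ * ∫⁻ ω in A, ENNReal.ofReal (w s i ω) ∂μ := by
            congr 1
            exact lintegral_congr fun ω => by rw [hsup2 ω]
    -- the set of summable weights
    set G : Ω → ℝ≥0∞ := fun ω => ∑' i, ENNReal.ofReal (w s i ω) with hG
    have hGmeas : Measurable[ℱ s] G :=
      Measurable.ennreal_tsum fun i => ENNReal.measurable_ofReal.comp (hwmeas s i).measurable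
    set S : Set Ω := {ω | G ω ≠ ⊤} with hS
    have hSmeas : MeasurableSet[ℱ s] S := by
      have : S = G ⁻¹' ({⊤}ᶜ) := rfl
      rw [this]
      exact hGmeas (measurableSet_singleton ⊤).compl
    have hSmeas' : MeasurableSet S := hm _ hSmeas
    have hSsum : ∀ ω, ω ∈ S ↔ Summable fun i => w s i ω := fun ω =>
      tsum_ofReal_ne_top_iff_summable fun i => hw0 s i ω
    have hGS : ∀ᵐ ω ∂μ, ω ∈ S → G ω = ENNReal.ofReal (N s ω) := by
      filter_upwards [hwsum s] with ω hω hmem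
      rw [← hω, ENNReal.ofReal_tsum_of_nonneg (fun i => hw0 s i ω) ((hSsum ω).1 hmem)]
    have hScNs : ∀ᵐ ω ∂μ, ω ∉ S → N s ω = 0 := by
      filter_upwards [hwsum s] with ω hω hmem
      rw [← hω, tsum_eq_zero_of_not_summable fun hsum => hmem ((hSsum ω).2 hsum)]
    -- a nonnegative martingale that vanishes stays vanished
    have hzero : ∀ᵐ ω ∂μ, N s ω = 0 → Ninf ω = 0 := by
      set B : Set Ω := {ω | N s ω = 0} with hB
      have hBmeas : MeasurableSet[ℱ s] B := by
        have : B = (N s) ⁻¹' {0} := rfl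
        rw [this]
        exact (hmart.stronglyAdapted s).measurable (measurableSet_singleton 0)
      have hBmeas' : MeasurableSet B := hm _ hBmeas
      have ht : ∀ k, ∀ᵐ ω ∂μ.restrict B, N (s + k) ω = 0 := by
        intro k
        have h1 : ∫ ω in B, N (s + k) ω ∂μ = 0 := by
          have e1 : ∫ ω in B, N (s + k) ω ∂μ = ∫ ω in B, N s ω ∂μ := by
            rw [← setIntegral_condExp hm (hNint (s + k)) hBmeas]
            exact setIntegral_congr_ae hBmeas'
              ((hmart.condExp_ae_eq (Nat.le_add_right s k)).mono fun ω hω _ => hω)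
          have e2 : ∫ ω in B, N s ω ∂μ = ∫ ω in B, (0 : ℝ) ∂μ :=
            setIntegral_congr_ae hBmeas' (ae_of_all _ fun ω (hmem : ω ∈ B) => hmem)
          rw [e1, e2, integral_zero]
        have h2 := (integral_eq_zero_iff_of_nonneg_ae
          (ae_restrict_of_ae (ae_of_all _ (hpos (s + k)))) ((hNint (s + k)).restrict)).mp h1
        filter_upwards [h2] with ω hω
        exact hω
      have hall : ∀ᵐ ω ∂μ.restrict B, ∀ k, N (s + k) ω = 0 := ae_all_iff.2 ht
      have hlim' : ∀ᵐ ω ∂μ.restrict B, Tendsto (fun t => N t ω) atTop (nhds (Ninf ω)) :=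
        ae_restrict_of_ae hlim
      have hres : ∀ᵐ ω ∂μ.restrict B, Ninf ω = 0 := by
        filter_upwards [hall, hlim'] with ω h1 h2
        have h3 : Tendsto (fun k => N (k + s) ω) atTop (nhds (Ninf ω)) :=
          h2.comp (tendsto_add_atTop_nat s)
        have h4 : Tendsto (fun k => N (k + s) ω) atTop (nhds (0 : ℝ)) := by
          have he : (fun k => N (k + s) ω) = fun _ => (0 : ℝ) :=
            funext fun k => by rw [Nat.add_comm]; exact h1 k
          rw [he]
          exact tendsto_const_nhds
        exact tendsto_nhds_unique h3 h4
      have := (ae_restrict_iff' hBmeas').1 hres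
      filter_upwards [this] with ω hω h0
      exact hω h0
    -- summed identity
    set F : Ω → ℝ≥0∞ := fun ω => ∑' i, ENNReal.ofReal (w s i ω * Ninf' s i ω) with hF
    have hFaemeas : AEMeasurable F μ := AEMeasurable.ennreal_tsum fun i =>
      ENNReal.measurable_ofReal.comp_aemeasurable
        (((hwmeas s i).mono hm).measurable.aemeasurable.mul (hN'meas s i))
    have hkey_sum : ∀ A, MeasurableSet[ℱ s] A →
        ∫⁻ ω in A, F ω ∂μ = ENNReal.ofReal ℓ * ∫⁻ ω in A, G ω ∂μ := by
      intro A hA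
      calc ∫⁻ ω in A, ∑' i, ENNReal.ofReal (w s i ω * Ninf' s i ω) ∂μ
          = ∑' i, ∫⁻ ω in A, ENNReal.ofReal (w s i ω * Ninf' s i ω) ∂μ :=
            lintegral_tsum fun i => (ENNReal.measurable_ofReal.comp_aemeasurable
              (((hwmeas s i).mono hm).measurable.aemeasurable.mul (hN'meas s i))).restrict
        _ = ∑' i, ENNReal.ofReal ℓ * ∫⁻ ω in A, ENNReal.ofReal (w s i ω) ∂μ :=
            tsum_congr fun i => key_i i A hA
        _ = ENNReal.ofReal ℓ * ∑' i, ∫⁻ ω in A, ENNReal.ofReal (w s i ω) ∂μ :=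
            ENNReal.tsum_mul_left
        _ = ENNReal.ofReal ℓ * ∫⁻ ω in A, ∑' i, ENNReal.ofReal (w s i ω) ∂μ := by
            congr 1
            exact (lintegral_tsum fun i => (ENNReal.measurable_ofReal.comp
              ((hwmeas s i).mono hm).measurable).aemeasurable.restrict).symm
    have hNs_lin : ∫⁻ ω, ENNReal.ofReal (N s ω) ∂μ = ENNReal.ofReal 1 := by
      rw [← ofReal_integral_eq_lintegral_ofReal (hNint s) (ae_of_all _ (hpos s)), hNmean s]
    have hfinS : ∫⁻ ω in S, F ω ∂μ ≠ ⊤ := by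
      rw [hkey_sum S hSmeas]
      refine ENNReal.mul_ne_top ENNReal.ofReal_ne_top ?_
      have h1 : ∫⁻ ω in S, G ω ∂μ = ∫⁻ ω in S, ENNReal.ofReal (N s ω) ∂μ :=
        lintegral_congr_ae ((ae_restrict_iff' hSmeas').2 hGS)
      rw [h1]
      exact ne_of_lt (lt_of_le_of_lt (lintegral_mono' Measure.restrict_le_self le_rfl)
        (by rw [hNs_lin]; exact ENNReal.ofReal_lt_top))
    have hFNinf : ∀ᵐ ω ∂μ.restrict S, F ω = ENNReal.ofReal (Ninf ω) := by
      filter_upwards [ae_lt_top' hFaemeas.restrict hfinS, ae_restrict_of_ae (hdecomp s),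
        ae_restrict_of_ae (ae_all_iff.2 fun i => hN'nn s i)] with ω h1 h2 h3
      have hnn : ∀ i, 0 ≤ w s i ω * Ninf' s i ω := fun i => mul_nonneg (hw0 s i ω) (h3 i)
      have hsumm : Summable fun i => w s i ω * Ninf' s i ω :=
        (tsum_ofReal_ne_top_iff_summable hnn).1 h1.ne
      rw [h2, ENNReal.ofReal_tsum_of_nonneg hnn hsumm]
    -- the set integral identity
    have hint : ∀ A, MeasurableSet[ℱ s] A →
        ∫ ω in A, ℓ * N s ω ∂μ = ∫ ω in A, Ninf ω ∂μ := by
      intro A hA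
      have hA' : MeasurableSet A := hm _ hA
      have hAS : MeasurableSet[ℱ s] (A ∩ S) := hA.inter hSmeas
      have hNinf_diff : ∫ ω in A \ S, Ninf ω ∂μ = 0 := by
        have h0 : ∀ᵐ ω ∂μ.restrict (A \ S), Ninf ω = 0 := by
          refine (ae_restrict_iff' (hA'.diff hSmeas')).2 ?_
          filter_upwards [hScNs, hzero] with ω h1 h2 hmem
          exact h2 (h1 hmem.2)
        exact integral_eq_zero_of_ae h0
      have hNs_diff : ∫ ω in A \ S, N s ω ∂μ = 0 := by
        have h0 : ∀ᵐ ω ∂μ.restrict (A \ S), N s ω = 0 := by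
          refine (ae_restrict_iff' (hA'.diff hSmeas')).2 ?_
          filter_upwards [hScNs] with ω h1 hmem
          exact h1 hmem.2
        exact integral_eq_zero_of_ae h0
      have hmain : ∫ ω in A ∩ S, Ninf ω ∂μ = ℓ * ∫ ω in A ∩ S, N s ω ∂μ := by
        have e1 : ∫⁻ ω in A ∩ S, ENNReal.ofReal (Ninf ω) ∂μ = ∫⁻ ω in A ∩ S, F ω ∂μ := by
          refine lintegral_congr_ae ?_
          filter_upwards [ae_mono (Measure.restrict_mono Set.inter_subset_right le_rfl)
            hFNinf] with ω hω
          exact hω.symm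
        have e2 : ∫⁻ ω in A ∩ S, G ω ∂μ = ∫⁻ ω in A ∩ S, ENNReal.ofReal (N s ω) ∂μ :=
          lintegral_congr_ae (ae_mono (Measure.restrict_mono Set.inter_subset_right le_rfl)
            ((ae_restrict_iff' hSmeas').2 hGS))
        have l1 : ∫⁻ ω in A ∩ S, ENNReal.ofReal (Ninf ω) ∂μ
            = ENNReal.ofReal ℓ * ∫⁻ ω in A ∩ S, ENNReal.ofReal (N s ω) ∂μ := by
          rw [e1, hkey_sum (A ∩ S) hAS, e2]
        have b1 : ENNReal.ofReal (∫ ω in A ∩ S, Ninf ω ∂μ)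
            = ∫⁻ ω in A ∩ S, ENNReal.ofReal (Ninf ω) ∂μ :=
          ofReal_integral_eq_lintegral_ofReal hNinf_int.restrict (ae_restrict_of_ae hNinf_nn)
        have b2 : ENNReal.ofReal (∫ ω in A ∩ S, N s ω ∂μ)
            = ∫⁻ ω in A ∩ S, ENNReal.ofReal (N s ω) ∂μ :=
          ofReal_integral_eq_lintegral_ofReal (hNint s).restrict
            (ae_restrict_of_ae (ae_of_all _ (hpos s)))
        rw [← b1, ← b2, ← ENNReal.ofReal_mul hℓnn] at l1
        have hNinf_nn' : 0 ≤ ∫ ω in A ∩ S, Ninf ω ∂μ :=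
          integral_nonneg_of_ae (ae_restrict_of_ae hNinf_nn)
        have hNs_nn' : 0 ≤ ∫ ω in A ∩ S, N s ω ∂μ :=
          integral_nonneg_of_ae (ae_restrict_of_ae (ae_of_all _ (hpos s)))
        exact (ENNReal.ofReal_eq_ofReal_iff hNinf_nn' (mul_nonneg hℓnn hNs_nn')).1 l1
      have split1 : ∫ ω in A, Ninf ω ∂μ
          = ∫ ω in A ∩ S, Ninf ω ∂μ + ∫ ω in A \ S, Ninf ω ∂μ :=
        (integral_inter_add_diff hSmeas' hNinf_int.integrableOn).symm
      have split2 : ∫ ω in A, N s ω ∂μ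
          = ∫ ω in A ∩ S, N s ω ∂μ + ∫ ω in A \ S, N s ω ∂μ :=
        (integral_inter_add_diff hSmeas' (hNint s).integrableOn).symm
      calc ∫ ω in A, ℓ * N s ω ∂μ = ℓ * ∫ ω in A, N s ω ∂μ := integral_const_mul ℓ _
        _ = ℓ * (∫ ω in A ∩ S, N s ω ∂μ + 0) := by rw [split2, hNs_diff]
        _ = ∫ ω in A ∩ S, Ninf ω ∂μ := by rw [add_zero, ← hmain]
        _ = ∫ ω in A, Ninf ω ∂μ := by rw [split1, hNinf_diff, add_zero]
    refine ae_eq_condExp_of_forall_setIntegral_eq hm hNinf_int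
      (fun A hA hμA => ((hNint s).const_mul ℓ).integrableOn)
      (fun A hA hμA => hint A hA) ?_
    exact (stronglyMeasurable_const.mul (hmart.stronglyAdapted s)).aestronglyMeasurable
  -- Lévy upward convergence and conclusion
  have hbdd : ∀ n, eLpNorm (N n) 1 μ ≤ ((1 : ℝ≥0) : ℝ≥0∞) := by
    intro n
    rw [eLpNorm_one_eq_lintegral_enorm]
    have heq : ∀ ω, ((‖N n ω‖₊ : ℝ≥0) : ℝ≥0∞) = ENNReal.ofReal (N n ω) := fun ω => by
      rw [show ((‖N n ω‖₊ : ℝ≥0) : ℝ≥0∞) = ENNReal.ofReal ‖N n ω‖ from (ofReal_norm (N n ω)).symm,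
        Real.norm_of_nonneg (hpos n ω)]
    calc ∫⁻ ω, ((‖N n ω‖₊ : ℝ≥0) : ℝ≥0∞) ∂μ = ∫⁻ ω, ENNReal.ofReal (N n ω) ∂μ :=
          lintegral_congr heq
      _ = ENNReal.ofReal (∫ ω, N n ω ∂μ) :=
          (ofReal_integral_eq_lintegral_ofReal (hNint n) (ae_of_all _ (hpos n))).symm
      _ ≤ ((1 : ℝ≥0) : ℝ≥0∞) := by rw [hNmean n]; simp
  have htend := hmart.submartingale.ae_tendsto_limitProcess hbdd
  have hgNinf : ℱ.limitProcess N μ =ᵐ[μ] Ninf := by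
    filter_upwards [htend, hlim] with ω h1 h2
    exact tendsto_nhds_unique h1 h2
  have hgint : Integrable (ℱ.limitProcess N μ) μ := hNinf_int.congr hgNinf.symm
  have hlevy := hgint.tendsto_ae_condExp Filtration.stronglyMeasurable_limitProcess
  have hce' : ∀ n, μ[ℱ.limitProcess N μ|ℱ n] =ᵐ[μ] fun ω => ℓ * N n ω := fun n =>
    (condExp_congr_ae hgNinf).trans (hce n).symm
  have hkey : ∀ᵐ ω ∂μ, Ninf ω = ℓ * Ninf ω := by
    filter_upwards [hlevy, hlim, hgNinf, ae_all_iff.2 hce'] with ω h1 h2 h3 h4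
    have h5 : Tendsto (fun n => ℓ * N n ω) atTop (nhds (ℱ.limitProcess N μ ω)) :=
      h1.congr fun n => h4 n
    have h6 : Tendsto (fun n => ℓ * N n ω) atTop (nhds (ℓ * Ninf ω)) := h2.const_mul ℓ
    calc Ninf ω = ℱ.limitProcess N μ ω := h3.symm
      _ = ℓ * Ninf ω := tendsto_nhds_unique h5 h6
  have hsq : ℓ = ℓ * ℓ := by
    have h := integral_congr_ae hkey
    rwa [integral_const_mul, ← hℓ] at h
  rcases mul_eq_zero.mp (show ℓ * (ℓ - 1) = 0 by linear_combination -hsq) with h | h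
  · exact Or.inl h
  · exact Or.inr (by linarith)
end

section
/- Let $(a_t)_{t\geq 1}$ be nonnegative reals with $a_t \leq c_1 t^{-d/2}$, $\sum_t a_t = \eta < 1$, $d \geq 3$, and let $(b_t)_{t \geq 0}$ be nonnegative with $b_t \leq c_2 t^{-d/2}$ for $t \geq 1$ and $b_0 \leq c_2$. Then there is a constant $C$ such that for all $t \geq 1$, $\sum_{k=0}^{\infty} \sum_{t_0 + t_1 + \cdots + t_k = t} b_{t_0} a_{t_1} \cdots a_{t_k} \leq C t^{-d/2}$, where $t_0 \geq 0$ and $t_1, \dots, t_k \geq 1$. -/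
open scoped BigOperators

open Finset

-- Lemma: sum over range of A k u ≤ η^k
lemma sumA_le (a' : ℕ → ℝ) (h0 : ∀ s, 0 ≤ a' s) (η : ℝ) (hη0 : 0 ≤ η)
    (hle : ∀ T : ℕ, ∑ s ∈ Finset.range (T+1), a' s ≤ η) (k T : ℕ) :
    ∑ u ∈ Finset.range (T+1), ∑ f ∈ Finset.Nat.antidiagonalTuple k u, ∏ i, a' (f i) ≤ η ^ k := by
  have hdisj : (Finset.range (T+1) : Set ℕ).PairwiseDisjoint (Finset.Nat.antidiagonalTuple k) := by
    intro u _ v _ huv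
    simp only [Function.onFun]
    rw [Finset.disjoint_left]
    intro f hfu hfv
    rw [Finset.Nat.mem_antidiagonalTuple] at hfu hfv
    exact huv (hfu ▸ hfv ▸ rfl)
  rw [← Finset.sum_biUnion hdisj]
  have hsub : (Finset.range (T+1)).biUnion (Finset.Nat.antidiagonalTuple k) ⊆
      Fintype.piFinset (fun _ : Fin k => Finset.range (T+1)) := by
    intro f hf
    simp only [Finset.mem_biUnion, Finset.Nat.mem_antidiagonalTuple] at hf
    obtain ⟨u, hu, hfu⟩ := hf
    rw [Finset.mem_range] at hu
    rw [Fintype.mem_piFinset]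
    intro i
    rw [Finset.mem_range]
    calc f i ≤ ∑ j, f j := Finset.single_le_sum (fun j _ => Nat.zero_le _) (Finset.mem_univ i)
    _ = u := hfu
    _ < T + 1 := hu
  calc ∑ f ∈ (Finset.range (T+1)).biUnion (Finset.Nat.antidiagonalTuple k), ∏ i, a' (f i)
      ≤ ∑ f ∈ Fintype.piFinset (fun _ : Fin k => Finset.range (T+1)), ∏ i, a' (f i) :=
        Finset.sum_le_sum_of_subset_of_nonneg hsub
          (fun f _ _ => Finset.prod_nonneg fun i _ => h0 _)
    _ = ∏ _i : Fin k, ∑ s ∈ Finset.range (T+1), a' s := (Finset.prod_univ_sum _ _).symm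
    _ = (∑ s ∈ Finset.range (T+1), a' s) ^ k := by rw [Finset.prod_const, Finset.card_univ, Fintype.card_fin]
    _ ≤ η ^ k := pow_le_pow_left₀ (Finset.sum_nonneg fun s _ => h0 s) (hle T) k

lemma rpow_neg_anti {x y e : ℝ} (hx : 0 < x) (hxy : x ≤ y) (he : 0 ≤ e) :
    y ^ (-e) ≤ x ^ (-e) := by
  rw [Real.rpow_neg hx.le, Real.rpow_neg (hx.trans_le hxy).le]
  exact inv_anti₀ (Real.rpow_pos_of_pos hx e) (Real.rpow_le_rpow hx.le hxy he)

set_option maxHeartbeats 1000000 in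
lemma keyA (a' : ℕ → ℝ) (h0 : ∀ s, 0 ≤ a' s) (η c1 e : ℝ) (he : 0 < e) (hη0 : 0 ≤ η)
    (hc1 : 0 ≤ c1)
    (hle : ∀ T : ℕ, ∑ s ∈ Finset.range (T+1), a' s ≤ η)
    (hpt : ∀ s : ℕ, a' s ≤ c1 * (s:ℝ) ^ (-e))
    (K t : ℕ) (ht : 1 ≤ t) :
    ∑ f ∈ Finset.Nat.antidiagonalTuple (K+1) t, ∏ i, a' (f i)
      ≤ c1 * ((K+1:ℕ):ℝ) ^ ((1:ℝ)+e) * η ^ K * (t:ℝ) ^ (-e) := by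
  set m : ℕ := K + 1 with hm
  set T := Finset.Nat.antidiagonalTuple m t with hT
  set P : (Fin m → ℕ) → ℝ := fun f => ∏ i, a' (f i) with hP
  have hPnn : ∀ f, 0 ≤ P f := fun f => Finset.prod_nonneg fun i _ => h0 _
  set S : Fin m → ℝ := fun i => ∑ f ∈ T.filter (fun f => t ≤ m * f i), P f with hS
  -- Step 3a
  have h3a : ∑ f ∈ T, P f ≤ ∑ i : Fin m, S i := by
    have step1 : ∀ f ∈ T, P f ≤ ∑ i ∈ Finset.univ.filter (fun i : Fin m => t ≤ m * f i), P f := by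
      intro f hf
      rw [hT, Finset.Nat.mem_antidiagonalTuple] at hf
      obtain ⟨i, _, hmax⟩ := Finset.exists_max_image Finset.univ f ⟨0, Finset.mem_univ 0⟩
      have hi : t ≤ m * f i := by
        calc t = ∑ j, f j := hf.symm
          _ ≤ Finset.univ.card • f i := Finset.sum_le_card_nsmul _ _ _ (fun j hj => hmax j hj)
          _ = m * f i := by rw [Finset.card_univ, Fintype.card_fin, smul_eq_mul]
      have hne : (Finset.univ.filter (fun j : Fin m => t ≤ m * f j)).Nonempty :=
        ⟨i, Finset.mem_filter.2 ⟨Finset.mem_univ i, hi⟩⟩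
      rw [Finset.sum_const, nsmul_eq_mul]
      calc P f = 1 * P f := (one_mul _).symm
        _ ≤ ((Finset.univ.filter (fun j : Fin m => t ≤ m * f j)).card : ℝ) * P f :=
            mul_le_mul_of_nonneg_right (by exact_mod_cast Finset.card_pos.2 hne) (hPnn f)
    calc ∑ f ∈ T, P f ≤ ∑ f ∈ T, ∑ i ∈ Finset.univ.filter (fun i : Fin m => t ≤ m * f i), P f :=
          Finset.sum_le_sum step1
      _ = ∑ f ∈ T, ∑ i : Fin m, if t ≤ m * f i then P f else 0 := by
          simp_rw [Finset.sum_filter]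
      _ = ∑ i : Fin m, ∑ f ∈ T, if t ≤ m * f i then P f else 0 := Finset.sum_comm
      _ = ∑ i : Fin m, S i := by simp_rw [hS, Finset.sum_filter]
  -- Step 3b : S i = S 0
  have h3b : ∀ i : Fin m, S i = S 0 := by
    intro i
    rw [hS]
    refine Finset.sum_nbij' (fun f => f ∘ (Equiv.swap i 0)) (fun f => f ∘ (Equiv.swap i 0))
      ?_ ?_ ?_ ?_ ?_
    · intro f hf
      rw [Finset.mem_filter, hT, Finset.Nat.mem_antidiagonalTuple] at hf ⊢
      refine ⟨(Equiv.sum_comp (Equiv.swap i 0) f).trans hf.1, ?_⟩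
      simpa [Equiv.swap_apply_right] using hf.2
    · intro f hf
      rw [Finset.mem_filter, hT, Finset.Nat.mem_antidiagonalTuple] at hf ⊢
      refine ⟨(Equiv.sum_comp (Equiv.swap i 0) f).trans hf.1, ?_⟩
      simpa [Equiv.swap_apply_left] using hf.2
    · intro f _; funext j; simp [Function.comp, Equiv.swap_apply_self]
    · intro f _; funext j; simp [Function.comp, Equiv.swap_apply_self]
    · intro f _
      exact (Equiv.prod_comp (Equiv.swap i 0) (fun j => a' (f j))).symm
  -- Step 3c : S 0 ≤ c1 * ((t:ℝ)/m)^(-e) * η^K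
  have hmpos : (0:ℝ) < (m:ℕ) := by positivity
  have htm : (0:ℝ) < (t:ℝ) / m := by positivity
  have h3c : S 0 ≤ (c1 * ((t:ℝ)/(m:ℕ)) ^ (-e)) * η ^ K := by
    set F := T.filter (fun f => t ≤ m * f 0) with hF
    have hbound : ∀ f ∈ F, P f ≤ (c1 * ((t:ℝ)/(m:ℕ)) ^ (-e)) * ∏ j : Fin K, a' (Fin.tail f j) := by
      intro f hf
      rw [hF, Finset.mem_filter] at hf
      have ha0' : a' (f 0) ≤ c1 * ((t:ℝ)/(m:ℕ)) ^ (-e) := by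
        refine (hpt (f 0)).trans ?_
        have hge : (t:ℝ)/(m:ℕ) ≤ (f 0 : ℕ) := by
          rw [div_le_iff₀ hmpos]
          exact_mod_cast Nat.le_of_lt_succ (Nat.lt_succ_of_le (by
            have := hf.2; nlinarith [hf.2]))
        exact mul_le_mul_of_nonneg_left (rpow_neg_anti htm hge he.le) hc1
      calc P f = a' (f 0) * ∏ j : Fin K, a' (f j.succ) := Fin.prod_univ_succ _
        _ ≤ (c1 * ((t:ℝ)/(m:ℕ)) ^ (-e)) * ∏ j : Fin K, a' (Fin.tail f j) := by
            exact mul_le_mul_of_nonneg_right ha0' (Finset.prod_nonneg fun j _ => h0 _)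
    have htail : ∑ f ∈ F, ∏ j : Fin K, a' (Fin.tail f j) ≤ η ^ K := by
      have hinj : ∀ f ∈ F, ∀ g ∈ F, Fin.tail f = Fin.tail g → f = g := by
        intro f hf g hg htl
        rw [hF, Finset.mem_filter, hT, Finset.Nat.mem_antidiagonalTuple] at hf hg
        have hsf := hf.1; have hsg := hg.1
        rw [Fin.sum_univ_succ] at hsf hsg
        have htl' : ∀ j : Fin K, f j.succ = g j.succ := fun j => congrFun htl j
        have h00 : f 0 = g 0 := by
          have : ∑ j : Fin K, f j.succ = ∑ j : Fin K, g j.succ :=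
            Finset.sum_congr rfl fun j _ => htl' j
          omega
        funext j
        refine Fin.cases h00 (fun j => htl' j) j
      have hsub : F.image Fin.tail ⊆ Fintype.piFinset (fun _ : Fin K => Finset.range (t+1)) := by
        intro g hg
        rw [Finset.mem_image] at hg
        obtain ⟨f, hf, rfl⟩ := hg
        rw [hF, Finset.mem_filter, hT, Finset.Nat.mem_antidiagonalTuple] at hf
        rw [Fintype.mem_piFinset]
        intro j
        rw [Finset.mem_range]
        calc Fin.tail f j = f j.succ := rfl
          _ ≤ ∑ i, f i := Finset.single_le_sum (fun i _ => Nat.zero_le _) (Finset.mem_univ _)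
          _ = t := hf.1
          _ < t + 1 := Nat.lt_succ_self t
      calc ∑ f ∈ F, ∏ j : Fin K, a' (Fin.tail f j)
          = ∑ g ∈ F.image Fin.tail, ∏ j : Fin K, a' (g j) := (Finset.sum_image (f := fun g : Fin K → ℕ => ∏ j : Fin K, a' (g j)) hinj).symm
        _ ≤ ∑ g ∈ Fintype.piFinset (fun _ : Fin K => Finset.range (t+1)), ∏ j, a' (g j) :=
            Finset.sum_le_sum_of_subset_of_nonneg hsub
              (fun g _ _ => Finset.prod_nonneg fun j _ => h0 _)
        _ = ∏ _j : Fin K, ∑ s ∈ Finset.range (t+1), a' s := (Finset.prod_univ_sum _ _).symm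
        _ = (∑ s ∈ Finset.range (t+1), a' s) ^ K := by
            rw [Finset.prod_const, Finset.card_univ, Fintype.card_fin]
        _ ≤ η ^ K := pow_le_pow_left₀ (Finset.sum_nonneg fun s _ => h0 s) (hle t) K
    calc S 0 = ∑ f ∈ F, P f := rfl
      _ ≤ ∑ f ∈ F, (c1 * ((t:ℝ)/(m:ℕ)) ^ (-e)) * ∏ j : Fin K, a' (Fin.tail f j) :=
          Finset.sum_le_sum hbound
      _ = (c1 * ((t:ℝ)/(m:ℕ)) ^ (-e)) * ∑ f ∈ F, ∏ j : Fin K, a' (Fin.tail f j) :=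
          (Finset.mul_sum _ _ _).symm
      _ ≤ (c1 * ((t:ℝ)/(m:ℕ)) ^ (-e)) * η ^ K := by
          have hnn : (0:ℝ) ≤ c1 * ((t:ℝ)/(m:ℕ)) ^ (-e) := by positivity
          exact mul_le_mul_of_nonneg_left htail hnn
  -- Step 3d : combine
  have halg : ((m:ℕ):ℝ) * (((t:ℝ)/(m:ℕ)) ^ (-e)) = ((m:ℕ):ℝ) ^ ((1:ℝ)+e) * (t:ℝ) ^ (-e) := by
    have htpos : (0:ℝ) < t := by positivity
    rw [Real.div_rpow htpos.le hmpos.le, Real.rpow_neg htpos.le, Real.rpow_neg hmpos.le,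
      Real.rpow_add hmpos, Real.rpow_one]
    field_simp
  calc ∑ f ∈ T, P f ≤ ∑ i : Fin m, S i := h3a
    _ = ∑ _i : Fin m, S 0 := Finset.sum_congr rfl fun i _ => h3b i
    _ = ((m:ℕ):ℝ) * S 0 := by rw [Finset.sum_const, Finset.card_univ, Fintype.card_fin, nsmul_eq_mul]
    _ ≤ ((m:ℕ):ℝ) * ((c1 * ((t:ℝ)/(m:ℕ)) ^ (-e)) * η ^ K) :=
        mul_le_mul_of_nonneg_left h3c hmpos.le
    _ = c1 * ((m:ℕ):ℝ) ^ ((1:ℝ)+e) * η ^ K * (t:ℝ) ^ (-e) := by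
        rw [show ((m:ℕ):ℝ) * ((c1 * ((t:ℝ)/(m:ℕ)) ^ (-e)) * η ^ K)
            = (c1 * η ^ K) * (((m:ℕ):ℝ) * ((t:ℝ)/(m:ℕ)) ^ (-e)) from by ring, halg]
        ring


theorem renewal_convolution_delocalization_bound
    (d : ℕ) (hd : 3 ≤ d) (a : ℕ → ℝ) (b : ℕ → ℝ) (c₁ c₂ η : ℝ)
    (hc₁ : 0 < c₁) (hc₂ : 0 < c₂)
    (ha0 : ∀ t, 0 ≤ a t) (hb0 : ∀ t, 0 ≤ b t)
    (hab : ∀ t : ℕ, 1 ≤ t → a t ≤ c₁ * (t : ℝ) ^ (-(d : ℝ)/2))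
    (hsum : Summable a) (hη : ∑' t, a t = η) (hη1 : η < 1)
    (hbb : ∀ t : ℕ, 1 ≤ t → b t ≤ c₂ * (t : ℝ) ^ (-(d : ℝ)/2))
    (hb0' : b 0 ≤ c₂) :
    ∃ C > (0:ℝ), ∀ t : ℕ, 1 ≤ t →
      (∑' k : ℕ,
        ∑ p ∈ Finset.HasAntidiagonal.antidiagonal t,
          b p.1 *
            ∑ f ∈ (Finset.Nat.antidiagonalTuple k p.2).filter (fun f => ∀ i, 1 ≤ f i),
              ∏ i, a (f i))
        ≤ C * (t : ℝ) ^ (-(d : ℝ)/2) := by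
  classical
  set e : ℝ := (d : ℝ) / 2 with he_def
  have he : 0 < e := by positivity
  have he1 : 1 < e := by
    rw [he_def]
    have : (3:ℝ) ≤ (d:ℝ) := by exact_mod_cast hd
    linarith
  have hexp : -(d : ℝ)/2 = -e := by rw [he_def, neg_div]
  set a' : ℕ → ℝ := fun s => if s = 0 then 0 else a s with ha'_def
  have h0' : ∀ s, 0 ≤ a' s := by
    intro s; rw [ha'_def]; dsimp only; split
    · exact le_refl 0
    · exact ha0 s
  have hη0 : 0 ≤ η := hη ▸ tsum_nonneg ha0
  have hle : ∀ T : ℕ, ∑ s ∈ Finset.range (T+1), a' s ≤ η := by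
    intro T
    have h1 : ∑ s ∈ Finset.range (T+1), a' s ≤ ∑ s ∈ Finset.range (T+1), a s :=
      Finset.sum_le_sum fun s _ => by
        rw [ha'_def]; dsimp only; split
        · exact ha0 s
        · exact le_refl _
    refine h1.trans ?_
    rw [← hη]
    exact Summable.sum_le_tsum _ (fun s _ => ha0 s) hsum
  have hpt : ∀ s : ℕ, a' s ≤ c₁ * (s:ℝ) ^ (-e) := by
    intro s
    rcases Nat.eq_zero_or_pos s with rfl | hs
    · rw [ha'_def]; simp [Real.zero_rpow (neg_ne_zero.2 (ne_of_gt he))]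
    · have : a' s = a s := by rw [ha'_def]; simp [Nat.pos_iff_ne_zero.1 hs]
      rw [this, ← hexp]
      exact hab s hs
  set A : ℕ → ℕ → ℝ := fun k u => ∑ f ∈ Finset.Nat.antidiagonalTuple k u, ∏ i, a' (f i)
    with hA_def
  have hAnn : ∀ k u, 0 ≤ A k u := fun k u =>
    Finset.sum_nonneg fun f _ => Finset.prod_nonneg fun i _ => h0' _
  have hfilter : ∀ k u, (∑ f ∈ (Finset.Nat.antidiagonalTuple k u).filter (fun f => ∀ i, 1 ≤ f i),
      ∏ i, a (f i)) = A k u := by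
    intro k u
    rw [hA_def]; dsimp only
    rw [Finset.sum_filter]
    refine Finset.sum_congr rfl fun f _ => ?_
    by_cases h : ∀ i, 1 ≤ f i
    · rw [if_pos h]
      refine Finset.prod_congr rfl fun i _ => ?_
      rw [ha'_def]; dsimp only
      rw [if_neg (by have := h i; omega)]
    · rw [if_neg h]
      push_neg at h
      obtain ⟨i, hi⟩ := h
      refine (Finset.prod_eq_zero (Finset.mem_univ i) ?_).symm
      rw [ha'_def]; dsimp only
      rw [if_pos (by omega)]
  have hAle : ∀ k u, A k u ≤ η ^ k := by
    intro k u
    calc A k u ≤ ∑ v ∈ Finset.range (u+1), A k v :=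
          Finset.single_le_sum (fun v _ => hAnn k v)
            (Finset.mem_range.2 (Nat.lt_succ_self u))
      _ ≤ η ^ k := sumA_le a' h0' η hη0 hle k u
  set β : ℝ := (1 + η) / 2 with hβ_def
  have hβ0 : 0 < β := by rw [hβ_def]; linarith
  have hβ1 : β < 1 := by rw [hβ_def]; linarith
  have hηβ : η ≤ β := by rw [hβ_def]; linarith
  have hAgeo : ∀ k u, A k u ≤ β ^ k := fun k u =>
    (hAle k u).trans (pow_le_pow_left₀ hη0 hηβ k)
  have hAsummable : ∀ u, Summable (fun k => A k u) := fun u =>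
    Summable.of_nonneg_of_le (fun k => hAnn k u) (fun k => hAgeo k u)
      (summable_geometric_of_lt_one hβ0.le hβ1)
  set G : ℕ → ℝ := fun u => ∑' k, A k u with hG_def
  have hA0 : ∀ k, A k 0 = if k = 0 then 1 else 0 := by
    intro k
    rw [hA_def]; dsimp only
    rw [Finset.Nat.antidiagonalTuple_zero_right, Finset.sum_singleton]
    rcases Nat.eq_zero_or_pos k with rfl | hk
    · simp
    · rw [if_neg (by omega)]
      refine Finset.prod_eq_zero (Finset.mem_univ ⟨0, hk⟩) ?_
      rw [ha'_def]; dsimp only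
      rw [Pi.zero_apply, if_pos rfl]
  have hG0 : G 0 = 1 := by
    rw [hG_def]; dsimp only
    rw [tsum_eq_single 0 (fun k hk => by rw [hA0 k, if_neg hk])]
    rw [hA0 0, if_pos rfl]
  set D : ℕ → ℝ := fun k => c₁ * (k:ℝ) ^ (2*d) * β ^ (k-1) with hD_def
  have hDnn : ∀ k, 0 ≤ D k := fun k => by rw [hD_def]; positivity
  have hDsummable : Summable D := by
    refine Summable.of_nonneg_of_le hDnn (f := fun k : ℕ => (c₁/β) * ((k:ℝ) ^ (2*d) * β ^ k)) ?_ ?_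
    · intro k
      rcases Nat.eq_zero_or_pos k with rfl | hk
      · rw [hD_def]; simp [Nat.pos_iff_ne_zero.1 (by positivity : 0 < 2*d)]
      · rw [hD_def]; dsimp only
        have hkk : k - 1 + 1 = k := by omega
        have : β ^ (k-1) = β ^ k / β := by
          rw [eq_div_iff (ne_of_gt hβ0), ← pow_succ, hkk]
        rw [this]
        refine le_of_eq ?_
        field_simp
    · exact (summable_pow_mul_geometric_of_norm_lt_one (R := ℝ) (2*d)
        (by rw [Real.norm_eq_abs, abs_of_nonneg hβ0.le]; exact hβ1)).mul_left _
  have hAD : ∀ k u, 1 ≤ u → A k u ≤ D k * (u:ℝ) ^ (-e) := by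
    intro k u hu
    rcases Nat.eq_zero_or_pos k with rfl | hk
    · obtain ⟨v, rfl⟩ := Nat.exists_eq_succ_of_ne_zero (by omega : u ≠ 0)
      rw [hA_def]; dsimp only
      rw [Finset.Nat.antidiagonalTuple_zero_succ, Finset.sum_empty, hD_def]
      dsimp only
      have : ((0:ℕ):ℝ) ^ (2*d) = 0 := by
        rw [Nat.cast_zero]
        exact zero_pow (by positivity)
      rw [this]
      positivity
    · obtain ⟨K, rfl⟩ := Nat.exists_eq_succ_of_ne_zero (by omega : k ≠ 0)
      have hkey := keyA a' h0' η c₁ e he hη0 hc₁.le hle hpt K u hu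
      rw [hA_def]; dsimp only
      refine hkey.trans ?_
      rw [hD_def]; dsimp only
      have h1 : ((K+1:ℕ):ℝ) ^ ((1:ℝ)+e) ≤ ((K+1:ℕ):ℝ) ^ (2*d) := by
        rw [← Real.rpow_natCast ((K+1:ℕ):ℝ) (2*d)]
        refine Real.rpow_le_rpow_of_exponent_le (by exact_mod_cast Nat.succ_le_succ (Nat.zero_le K)) ?_
        push_cast
        rw [he_def]
        have : (3:ℝ) ≤ (d:ℝ) := by exact_mod_cast hd
        linarith
      have h2 : η ^ K ≤ β ^ (K+1-1) := by
        rw [Nat.add_sub_cancel]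
        exact pow_le_pow_left₀ hη0 hηβ K
      have hrnn : (0:ℝ) ≤ (u:ℝ) ^ (-e) := Real.rpow_nonneg (Nat.cast_nonneg u) _
      calc c₁ * ((K+1:ℕ):ℝ) ^ ((1:ℝ)+e) * η ^ K * (u:ℝ) ^ (-e)
          ≤ c₁ * ((K+1:ℕ):ℝ) ^ (2*d) * β ^ (K+1-1) * (u:ℝ) ^ (-e) := by
            refine mul_le_mul_of_nonneg_right ?_ hrnn
            have e1 : (0:ℝ) ≤ c₁ * ((K+1:ℕ):ℝ) ^ ((1:ℝ)+e) := by positivity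
            refine mul_le_mul (mul_le_mul_of_nonneg_left h1 hc₁.le) h2 (by positivity) (by positivity)
        _ = c₁ * ((K+1:ℕ):ℝ) ^ (2*d) * β ^ (K+1-1) * (u:ℝ) ^ (-e) := rfl
  set M : ℝ := ∑' k, D k with hM_def
  have hM0 : 0 ≤ M := hM_def ▸ tsum_nonneg hDnn
  have hGM : ∀ u : ℕ, 1 ≤ u → G u ≤ M * (u:ℝ) ^ (-e) := by
    intro u hu
    rw [hG_def]; dsimp only
    have : M * (u:ℝ) ^ (-e) = ∑' k, D k * (u:ℝ) ^ (-e) := by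
      rw [tsum_mul_right, hM_def]
    rw [this]
    exact Summable.tsum_le_tsum (fun k => hAD k u hu) (hAsummable u)
      (hDsummable.mul_right _)
  have hGnn : ∀ u, 0 ≤ G u := fun u => tsum_nonneg fun k => hAnn k u
  set w : ℕ → ℝ := fun u => if u = 0 then 1 else (u:ℝ) ^ (-e) with hw_def
  have hwnn : ∀ u, 0 ≤ w u := by
    intro u; rw [hw_def]; dsimp only; split
    · norm_num
    · exact Real.rpow_nonneg (Nat.cast_nonneg u) _
  have hw1 : ∀ u : ℕ, 1 ≤ u → w u = (u:ℝ) ^ (-e) := by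
    intro u hu; rw [hw_def]; dsimp only; rw [if_neg (by omega)]
  set M' : ℝ := M + 1 with hM'_def
  have hM'1 : 1 ≤ M' := by rw [hM'_def]; linarith
  have hM'pos : 0 < M' := by linarith
  have hGw : ∀ u, G u ≤ M' * w u := by
    intro u
    rcases Nat.eq_zero_or_pos u with rfl | hu
    · rw [hG0, hw_def]; dsimp only; rw [if_pos rfl, mul_one]; exact hM'1
    · rw [hw1 u hu]
      refine (hGM u hu).trans ?_
      exact mul_le_mul_of_nonneg_right (by linarith) (Real.rpow_nonneg (Nat.cast_nonneg u) _)
  have hbw : ∀ s, b s ≤ c₂ * w s := by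
    intro s
    rcases Nat.eq_zero_or_pos s with rfl | hs
    · rw [hw_def]; dsimp only; rw [if_pos rfl, mul_one]; exact hb0'
    · rw [hw1 s hs, ← hexp]; exact hbb s hs
  have hZsummable : Summable (fun n : ℕ => (n:ℝ) ^ (-e)) :=
    Real.summable_nat_rpow.2 (by linarith)
  set Z : ℝ := ∑' n : ℕ, (n:ℝ) ^ (-e) with hZ_def
  have hZ0 : 0 ≤ Z := tsum_nonneg fun n => Real.rpow_nonneg (Nat.cast_nonneg n) _
  have hwsum : ∀ T : ℕ, ∑ s ∈ Finset.range (T+1), w s ≤ 1 + Z := by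
    intro T
    have hstep : ∀ s ∈ Finset.range (T+1), w s ≤ (if s = 0 then 1 else 0) + (s:ℝ) ^ (-e) := by
      intro s _
      rcases Nat.eq_zero_or_pos s with rfl | hs
      · rw [hw_def]; dsimp only
        rw [if_pos rfl, if_pos rfl, Nat.cast_zero,
          Real.zero_rpow (neg_ne_zero.2 (ne_of_gt he))]
        norm_num
      · rw [hw1 s hs, if_neg (by omega)]; norm_num
    calc ∑ s ∈ Finset.range (T+1), w s
        ≤ ∑ s ∈ Finset.range (T+1), ((if s = 0 then 1 else 0) + (s:ℝ) ^ (-e)) :=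
          Finset.sum_le_sum hstep
      _ = (∑ s ∈ Finset.range (T+1), (if s = 0 then (1:ℝ) else 0))
          + ∑ s ∈ Finset.range (T+1), (s:ℝ) ^ (-e) := Finset.sum_add_distrib
      _ ≤ 1 + Z := by
          refine add_le_add ?_ ?_
          · rw [Finset.sum_ite_eq' (Finset.range (T+1)) 0 (fun _ => (1:ℝ))]
            rw [if_pos (Finset.mem_range.2 (Nat.succ_pos T))]
          · exact Summable.sum_le_tsum _ (fun s _ => Real.rpow_nonneg (Nat.cast_nonneg s) _) hZsummable
  have hhalf : ∀ (t u : ℕ), 1 ≤ t → 1 ≤ u → t ≤ 2*u → w u ≤ (2:ℝ)^e * (t:ℝ) ^ (-e) := by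
    intro t u ht hu htu
    have ht' : (0:ℝ) < t := by exact_mod_cast ht
    have h1 : (t:ℝ)/2 ≤ (u:ℝ) := by
      have : (t:ℝ) ≤ 2*(u:ℝ) := by exact_mod_cast htu
      linarith
    have h2 : (0:ℝ) < (t:ℝ)/2 := by positivity
    rw [hw1 u hu]
    calc (u:ℝ) ^ (-e) ≤ ((t:ℝ)/2) ^ (-e) := rpow_neg_anti h2 h1 he.le
      _ = (2:ℝ)^e * (t:ℝ) ^ (-e) := by
          rw [Real.div_rpow ht'.le (by norm_num : (0:ℝ) ≤ 2),
            Real.rpow_neg (by norm_num : (0:ℝ) ≤ 2)]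
          rw [div_eq_mul_inv, inv_inv]
          ring
  have hconv : ∀ s : ℕ, ∀ t : ℕ, 1 ≤ t → s ≤ t →
      w s * w (t-s) ≤ (2:ℝ)^e * (t:ℝ) ^ (-e) * (w s + w (t-s)) := by
    intro s t ht hst
    have hXnn : (0:ℝ) ≤ (2:ℝ)^e * (t:ℝ) ^ (-e) := by positivity
    by_cases hcase : t ≤ 2*s
    · have hs1 : 1 ≤ s := by omega
      have h1 : w s ≤ (2:ℝ)^e * (t:ℝ) ^ (-e) := hhalf t s ht hs1 hcase
      calc w s * w (t-s) ≤ ((2:ℝ)^e * (t:ℝ) ^ (-e)) * w (t-s) :=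
            mul_le_mul_of_nonneg_right h1 (hwnn _)
        _ ≤ (2:ℝ)^e * (t:ℝ) ^ (-e) * (w s + w (t-s)) := by
            refine mul_le_mul_of_nonneg_left ?_ hXnn
            linarith [hwnn s]
    · have hts1 : 1 ≤ t - s := by omega
      have htu : t ≤ 2*(t-s) := by omega
      have h1 : w (t-s) ≤ (2:ℝ)^e * (t:ℝ) ^ (-e) := hhalf t (t-s) ht hts1 htu
      calc w s * w (t-s) ≤ w s * ((2:ℝ)^e * (t:ℝ) ^ (-e)) :=
            mul_le_mul_of_nonneg_left h1 (hwnn _)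
        _ = ((2:ℝ)^e * (t:ℝ) ^ (-e)) * w s := by ring
        _ ≤ (2:ℝ)^e * (t:ℝ) ^ (-e) * (w s + w (t-s)) := by
            refine mul_le_mul_of_nonneg_left ?_ hXnn
            linarith [hwnn (t-s)]
  refine ⟨c₂ * M' * (2:ℝ)^e * (2*(1+Z)), ?_, ?_⟩
  · have h2e : (0:ℝ) < (2:ℝ)^e := Real.rpow_pos_of_pos two_pos e
    have : (0:ℝ) < 2*(1+Z) := by linarith
    exact mul_pos (mul_pos (mul_pos hc₂ hM'pos) h2e) this
  intro t ht
  rw [hexp]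
  have step1 : (∑' k : ℕ,
      ∑ p ∈ Finset.HasAntidiagonal.antidiagonal t,
        b p.1 *
          ∑ f ∈ (Finset.Nat.antidiagonalTuple k p.2).filter (fun f => ∀ i, 1 ≤ f i),
            ∏ i, a (f i))
      = ∑ p ∈ Finset.HasAntidiagonal.antidiagonal t, b p.1 * G p.2 := by
    have h1 : ∀ k : ℕ, (∑ p ∈ Finset.HasAntidiagonal.antidiagonal t,
        b p.1 * ∑ f ∈ (Finset.Nat.antidiagonalTuple k p.2).filter (fun f => ∀ i, 1 ≤ f i),
          ∏ i, a (f i)) = ∑ p ∈ Finset.HasAntidiagonal.antidiagonal t, b p.1 * A k p.2 :=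
      fun k => Finset.sum_congr rfl fun p _ => by rw [hfilter]
    calc (∑' k : ℕ, ∑ p ∈ Finset.HasAntidiagonal.antidiagonal t,
          b p.1 * ∑ f ∈ (Finset.Nat.antidiagonalTuple k p.2).filter (fun f => ∀ i, 1 ≤ f i),
            ∏ i, a (f i))
        = ∑' k : ℕ, ∑ p ∈ Finset.HasAntidiagonal.antidiagonal t, b p.1 * A k p.2 := tsum_congr h1
      _ = ∑ p ∈ Finset.HasAntidiagonal.antidiagonal t, ∑' k : ℕ, b p.1 * A k p.2 :=
          Summable.tsum_finsetSum (fun p _ => (hAsummable p.2).mul_left _)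
      _ = ∑ p ∈ Finset.HasAntidiagonal.antidiagonal t, b p.1 * G p.2 :=
          Finset.sum_congr rfl fun p _ => tsum_mul_left
  rw [step1, Finset.Nat.sum_antidiagonal_eq_sum_range_succ_mk]
  have hc2M' : (0:ℝ) ≤ c₂ * M' := by positivity
  have hterm : ∀ s ∈ Finset.range (t+1), b s * G (t-s)
      ≤ (c₂ * M' * ((2:ℝ)^e * (t:ℝ) ^ (-e))) * (w s + w (t-s)) := by
    intro s hs
    rw [Finset.mem_range] at hs
    calc b s * G (t-s) ≤ (c₂ * w s) * (M' * w (t-s)) :=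
          mul_le_mul (hbw s) (hGw (t-s)) (hGnn _) (mul_nonneg hc₂.le (hwnn s))
      _ = (c₂ * M') * (w s * w (t-s)) := by ring
      _ ≤ (c₂ * M') * ((2:ℝ)^e * (t:ℝ) ^ (-e) * (w s + w (t-s))) :=
          mul_le_mul_of_nonneg_left (hconv s t ht (by omega)) hc2M'
      _ = (c₂ * M' * ((2:ℝ)^e * (t:ℝ) ^ (-e))) * (w s + w (t-s)) := by ring
  have hXnn2 : (0:ℝ) ≤ c₂ * M' * ((2:ℝ)^e * (t:ℝ) ^ (-e)) := by positivity
  calc ∑ s ∈ Finset.range (t+1), b s * G (t-s)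
      ≤ ∑ s ∈ Finset.range (t+1), (c₂ * M' * ((2:ℝ)^e * (t:ℝ) ^ (-e))) * (w s + w (t-s)) :=
        Finset.sum_le_sum hterm
    _ = (c₂ * M' * ((2:ℝ)^e * (t:ℝ) ^ (-e))) * ∑ s ∈ Finset.range (t+1), (w s + w (t-s)) :=
        (Finset.mul_sum _ _ _).symm
    _ ≤ (c₂ * M' * ((2:ℝ)^e * (t:ℝ) ^ (-e))) * (2*(1+Z)) := by
        refine mul_le_mul_of_nonneg_left ?_ hXnn2
        rw [Finset.sum_add_distrib]
        have hrefl : ∑ s ∈ Finset.range (t+1), w (t - s) = ∑ s ∈ Finset.range (t+1), w s := by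
          have h := Finset.sum_range_reflect w (t+1)
          simpa using h
        rw [hrefl]
        linarith [hwsum t]
    _ = (c₂ * M' * (2:ℝ)^e * (2*(1+Z))) * (t:ℝ) ^ (-e) := by ring
end
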